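/- Let H be a real Hilbert space, K a nonempty convex subset of H, g : H → H a map whose range contains K (for every x ∈ K there exists w ∈ H with g w = x), p > 1, μ > 0, and F : H → ℝ Fréchet differentiable. If the gradient of F is higher order strongly monotone on K, i.e. ⟨∇F(x) − ∇F(y), x − y⟩ ≥ 2μ·‖y − x‖^p for all x, y ∈ K, then F(g v) − F(g u) ≥ ⟨∇F(g u), g v − g u⟩ + (2μ/p)·‖g v − g u‖^p for all u, v ∈ H with g u, g v ∈ K. -/

import Mathlib

open scoped RealInnerProductSpace

theorem stmt_10 {H : Type*} [NormedAddCommGroup H] [InnerProductSpace ℝ H] [CompleteSpace H]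
    (K : Set H) (hK : K.Nonempty) (hKconv : Convex ℝ K)
    (g : H → H) (hg : ∀ x ∈ K, ∃ w : H, g w = x)
    (p μ : ℝ) (hp : 1 < p) (hμ : 0 < μ)
    (F : H → ℝ) (F' : H → H) (hF : ∀ x : H, HasGradientAt F (F' x) x)
    (hmono : ∀ x ∈ K, ∀ y ∈ K, 2 * μ * ‖y - x‖ ^ p ≤ ⟪F' x - F' y, x - y⟫) :
    ∀ u v : H, g u ∈ K → g v ∈ K →
      ⟪F' (g u), g v - g u⟫ + (2 * μ / p) * ‖g v - g u‖ ^ p ≤ F (g v) - F (g u) := by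
  intro u v hu hv
  set x : H := g u with hx
  set y : H := g v with hy
  have hp0 : (0:ℝ) < p := lt_trans one_pos hp
  set c : ℝ := ⟪F' x, y - x⟫ with hc
  set N : ℝ := ‖y - x‖ ^ p with hN
  have hN0 : 0 ≤ N := Real.rpow_nonneg (norm_nonneg _) p
  set h : ℝ → ℝ := fun t => F (x + t • (y - x)) - t * c - (2 * μ / p) * t ^ p * N with hh
  -- derivative of the line
  have hline : ∀ t : ℝ, HasDerivAt (fun s : ℝ => x + s • (y - x)) (y - x) t := by
    intro t
    have := ((hasDerivAt_id t).smul_const (y - x)).const_add x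
    simpa using this
  have hφ : ∀ t : ℝ, HasDerivAt (fun s : ℝ => F (x + s • (y - x)))
      ⟪F' (x + t • (y - x)), y - x⟫ t := by
    intro t
    have := (hF (x + t • (y - x))).hasFDerivAt.comp_hasDerivAt t (hline t)
    simp at this; exact this
  have hhd : ∀ t : ℝ, HasDerivAt h
      (⟪F' (x + t • (y - x)), y - x⟫ - c - (2 * μ / p) * (p * t ^ (p - 1)) * N) t := by
    intro t
    have h1 := hφ t
    have h2 : HasDerivAt (fun s : ℝ => s * c) c t := by
      simpa using (hasDerivAt_id t).mul_const c
    have h3 : HasDerivAt (fun s : ℝ => (2 * μ / p) * s ^ p * N)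
        ((2 * μ / p) * (p * t ^ (p - 1)) * N) t := by
      have := (Real.hasDerivAt_rpow_const (x := t) (p := p) (Or.inr hp.le)).const_mul (2 * μ / p)
      simpa [mul_comm, mul_assoc, mul_left_comm] using this.mul_const N
    exact (h1.sub h2).sub h3
  have hmot : MonotoneOn h (Set.Icc (0:ℝ) 1) := by
    apply monotoneOn_of_deriv_nonneg (convex_Icc 0 1)
    · exact fun t _ => ((hhd t).continuousAt).continuousWithinAt
    · exact fun t _ => ((hhd t).differentiableAt).differentiableWithinAt
    · intro t ht
      rw [interior_Icc] at ht
      obtain ⟨ht0, ht1⟩ := ht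
      rw [(hhd t).deriv]
      set z : H := x + t • (y - x) with hz
      have hzK : z ∈ K := by
        have : z = (1 - t) • x + t • y := by
          rw [hz]; module
        rw [this]
        exact hKconv hu hv (by linarith) ht0.le (by ring)
      have hm := hmono z hzK x hu
      have hzx : z - x = t • (y - x) := by rw [hz]; abel
      have hnorm : ‖x - z‖ ^ p = t ^ p * N := by
        rw [norm_sub_rev, hzx, norm_smul, Real.norm_eq_abs, abs_of_pos ht0,
          Real.mul_rpow ht0.le (norm_nonneg _), hN]
      rw [hnorm, hzx, inner_smul_right] at hm
      have hinner : 2 * μ * t ^ (p - 1) * N ≤ ⟪F' z - F' x, y - x⟫ := by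
        have htp : t ^ p = t * t ^ (p - 1) := by
          have : t ^ p = t ^ (1 + (p - 1)) := by ring_nf
          rw [this, Real.rpow_add ht0, Real.rpow_one]
        rw [htp] at hm
        have := (mul_le_mul_iff_right₀ ht0).mp (by linarith : t * (2 * μ * t ^ (p - 1) * N) ≤ t * ⟪F' z - F' x, y - x⟫)
        exact this
      have hsplit : ⟪F' z - F' x, y - x⟫ = ⟪F' z, y - x⟫ - c := by
        rw [hc, inner_sub_left]
      rw [hsplit] at hinner
      have hcoef : (2 * μ / p) * (p * t ^ (p - 1)) * N = 2 * μ * t ^ (p - 1) * N := by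
        field_simp
      rw [hcoef]
      linarith
  have h01 : h 0 ≤ h 1 :=
    hmot (Set.mem_Icc.mpr ⟨le_refl 0, zero_le_one⟩) (Set.mem_Icc.mpr ⟨zero_le_one, le_refl 1⟩)
      zero_le_one
  have hh0 : h 0 = F x := by
    simp [hh, Real.zero_rpow (ne_of_gt hp0)]
  have hh1 : h 1 = F y - c - (2 * μ / p) * N := by
    simp [hh]
  rw [hh0, hh1] at h01
  linarith
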